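/- Let n ≥ 4 with 4 ∣ n and let A be a finite set with k = |A| ≥ 2. Let the dihedral group D_n of order 2n act on ℤ/nℤ by: the rotation r^j sends x to x + j, and the reflection s·r^j sends x to j − x; let D_n act on colorings f : ℤ/nℤ → A by (g•f)(x) = f(g⁻¹•x). Then the number of orbits of colorings that are free (of cardinality 2n) equals (1/(2n))·Σ_{d∣n} μ(n/d)·k^d − (1/4)·Σ_{d∣n, d even} μ(n/d)·(k^{d/2+1} + k^{d/2}), where μ is the Möbius function (when 4 ∣ n, μ(n/d) = 0 for every odd divisor d of n). -/

import Mathlib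

/-- The dihedral action on the vertices `ZMod n` of a regular `n`-gon: rotations
act by translation and the reflection `sr j = s·r^j` sends `x` to `j - x`. -/
instance dihedralVertexAction (n : ℕ) : MulAction (DihedralGroup n) (ZMod n) where
  smul g x := match g with
    | DihedralGroup.r j => x - j
    | DihedralGroup.sr j => j - x
  one_smul x := by show x - 0 = x; rw [sub_zero]
  mul_smul a b x := by
    cases a with
    | r i =>
      cases b with
      | r j => show x - (i + j) = x - j - i; ring
      | sr j => show (j - i) - x = (j - x) - i; ring
    | sr i =>
      cases b with
      | r j => show (i + j) - x = i - (x - j); ring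
      | sr j => show x - (j - i) = i - (j - x); ring

/-- The induced action on colorings `f : ZMod n → A`: `(g • f) x = f (g⁻¹ • x)`. -/
instance dihedralColoringAction (n : ℕ) (A : Type*) :
    MulAction (DihedralGroup n) (ZMod n → A) where
  smul g f := fun x => f (g⁻¹ • x)
  one_smul f := by
    funext x; show f ((1 : DihedralGroup n)⁻¹ • x) = f x; rw [inv_one, one_smul]
  mul_smul a b f := by
    funext x; show f ((a * b)⁻¹ • x) = f (b⁻¹ • a⁻¹ • x)
    rw [mul_inv_rev, mul_smul]


section Aux
namespace FreeOrbitsAux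

variable {n : ℕ} [NeZero n] {A : Type*} [Fintype A]

lemma r_smul_apply (j : ZMod n) (f : ZMod n → A) (x : ZMod n) :
    (DihedralGroup.r j • f) x = f (x + j) := by
  show f ((DihedralGroup.r j)⁻¹ • x) = f (x + j)
  show f (x - (-j)) = f (x + j)
  rw [sub_neg_eq_add]

lemma sr_smul_apply (j : ZMod n) (f : ZMod n → A) (x : ZMod n) :
    (DihedralGroup.sr j • f) x = f (j - x) := rfl

/-- rotation-periodicity by `e`. -/
def rotFix (e : ℕ) (f : ZMod n → A) : Prop := ∀ x : ZMod n, f (x + (e : ZMod n)) = f x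

/-- fixed by the reflection `sr j`. -/
def reflFix (j : ZMod n) (f : ZMod n → A) : Prop := ∀ x : ZMod n, f (j - x) = f x

def periodSet (f : ZMod n → A) : AddSubgroup ℤ where
  carrier := {m : ℤ | ∀ x : ZMod n, f (x + (m : ZMod n)) = f x}
  zero_mem' := by intro x; simp
  add_mem' := by
    intro a b ha hb x
    push_cast
    rw [← add_assoc, hb (x + a), ha x]
  neg_mem' := by
    intro a ha x
    have := ha (x + ((-a : ℤ) : ZMod n))
    push_cast at this ⊢
    rw [neg_add_cancel_right] at this
    rw [← this]

noncomputable def per (f : ZMod n → A) : ℕ :=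
  ((Int.subgroup_cyclic (periodSet f)).choose).natAbs

lemma mem_periodSet_iff (f : ZMod n → A) (m : ℤ) :
    m ∈ periodSet f ↔ (per f : ℤ) ∣ m := by
  have h := (Int.subgroup_cyclic (periodSet f)).choose_spec
  set a := (Int.subgroup_cyclic (periodSet f)).choose
  rw [h, AddSubgroup.mem_closure_singleton]
  unfold per
  constructor
  · rintro ⟨t, rfl⟩
    refine Int.natAbs_dvd.mpr ⟨t, ?_⟩
    rw [smul_eq_mul, mul_comm]
  · intro ht
    obtain ⟨s, rfl⟩ := Int.natAbs_dvd.mp ht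
    exact ⟨s, by rw [smul_eq_mul, mul_comm]⟩

lemma per_dvd_iff (f : ZMod n → A) (e : ℕ) : per f ∣ e ↔ rotFix e f := by
  have : rotFix e f ↔ ((e : ℤ) ∈ periodSet f) := by
    unfold rotFix periodSet
    simp only [AddSubgroup.mem_mk, Set.mem_setOf_eq]
    push_cast
    change _ ↔ ∀ x : ZMod n, f (x + ((e : ℤ) : ZMod n)) = f x
    simp only [Int.cast_natCast]
  rw [this, mem_periodSet_iff, Int.natCast_dvd_natCast]

lemma rotFix_per (f : ZMod n → A) : rotFix (per f) f := (per_dvd_iff f _).1 dvd_rfl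

lemma per_dvd_n (f : ZMod n → A) : per f ∣ n :=
  (per_dvd_iff f n).2 (by intro x; simp [ZMod.natCast_self])

lemma per_pos (f : ZMod n → A) : 0 < per f := by
  rcases Nat.eq_zero_or_pos (per f) with h | h
  · exfalso
    have := per_dvd_n f
    rw [h] at this
    exact (NeZero.ne n) (Nat.eq_zero_of_zero_dvd this)
  · exact h

lemma rot_fix_iff_dvd_val (f : ZMod n → A) (j : ZMod n) :
    (∀ x, f (x + j) = f x) ↔ per f ∣ j.val := by
  rw [per_dvd_iff]
  unfold rotFix
  rw [ZMod.natCast_val, ZMod.cast_id]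

lemma per_eq_n_iff (f : ZMod n → A) :
    per f = n ↔ ∀ j : ZMod n, (∀ x, f (x + j) = f x) → j = 0 := by
  constructor
  · intro h j hj
    rw [rot_fix_iff_dvd_val, h] at hj
    have hlt := ZMod.val_lt j
    have := Nat.eq_zero_of_dvd_of_lt hj hlt
    · exact (ZMod.val_eq_zero j).1 this
  · intro h
    have h1 : per f ∣ n := per_dvd_n f
    have h2 : ((per f : ℕ) : ZMod n) = 0 := by
      apply h
      have := rotFix_per f
      exact this
    rw [ZMod.natCast_eq_zero_iff] at h2
    exact Nat.dvd_antisymm h1 h2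

end FreeOrbitsAux

section B
namespace FreeOrbitsAux
variable {n : ℕ} [NeZero n] {A : Type*} [Fintype A]

lemma castHom_surj {e : ℕ} (he : e ∣ n) [NeZero e] :
    Function.Surjective (ZMod.castHom he (ZMod e)) := by
  intro y
  obtain ⟨m, rfl⟩ := ZMod.natCast_zmod_surjective y
  exact ⟨(m : ZMod n), map_natCast _ m⟩

lemma rotFix_mul (e : ℕ) (f : ZMod n → A) (hf : rotFix e f) (t : ℕ) (x : ZMod n) :
    f (x + ((e * t : ℕ) : ZMod n)) = f x := by
  induction t with
  | zero => simp
  | succ t ih =>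
    have : ((e * (t + 1) : ℕ) : ZMod n) = ((e * t : ℕ) : ZMod n) + (e : ZMod n) := by
      push_cast; ring
    rw [this, ← add_assoc, hf (x + ((e * t : ℕ) : ZMod n)), ih]

lemma rotFix_congr {e : ℕ} (he : e ∣ n) [NeZero e] {f : ZMod n → A} (hf : rotFix e f)
    {x y : ZMod n} (hxy : ZMod.castHom he (ZMod e) x = ZMod.castHom he (ZMod e) y) :
    f x = f y := by
  set z := x - y with hz
  have hzc : ZMod.castHom he (ZMod e) z = 0 := by
    rw [hz, map_sub, hxy, sub_self]
  have h1 : ZMod.castHom he (ZMod e) ((z.val : ℕ) : ZMod n) = ((z.val : ℕ) : ZMod e) :=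
    map_natCast _ _
  rw [ZMod.natCast_val, ZMod.cast_id, hzc] at h1
  have h2 : e ∣ z.val := (ZMod.natCast_eq_zero_iff _ _).mp h1.symm
  obtain ⟨t, ht⟩ := h2
  have hx : x = y + ((e * t : ℕ) : ZMod n) := by
    rw [← ht, ZMod.natCast_val, ZMod.cast_id, hz]; ring
  rw [hx, rotFix_mul e f hf t y]

/-- extension of a coloring of `ZMod e` to a periodic coloring of `ZMod n`. -/
noncomputable def extendMap {e : ℕ} (he : e ∣ n) [NeZero e] (A : Type*) [Fintype A] :
    (ZMod e → A) ≃ {f : ZMod n → A // rotFix e f} :=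
  Equiv.ofBijective
    (fun g => ⟨fun x => g (ZMod.castHom he (ZMod e) x), by
      intro x
      simp [map_add, map_natCast, ZMod.natCast_self]⟩)
    (by
      constructor
      · intro g g' hgg'
        funext y
        have hs : Function.Surjective (ZMod.castHom he (ZMod e)) :=
          castHom_surj he
        obtain ⟨x, rfl⟩ := hs y
        exact congrFun (Subtype.ext_iff.1 hgg') x
      · rintro ⟨f, hf⟩
        refine ⟨fun y => f ((y.val : ℕ) : ZMod n), ?_⟩
        ext x
        show f ((((ZMod.castHom he (ZMod e)) x).val : ℕ) : ZMod n) = f x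
        apply rotFix_congr he hf
        rw [map_natCast, ZMod.natCast_val, ZMod.cast_id])

lemma extendMap_reflFix {e : ℕ} (he : e ∣ n) [NeZero e] (g : ZMod e → A) (j : ZMod n) :
    reflFix j ((extendMap he A g : {f : ZMod n → A // rotFix e f}) : ZMod n → A) ↔
      ∀ y : ZMod e, g (ZMod.castHom he (ZMod e) j - y) = g y := by
  have hs : Function.Surjective (ZMod.castHom he (ZMod e)) := castHom_surj he
  show (∀ x : ZMod n, g (ZMod.castHom he (ZMod e) (j - x)) = g (ZMod.castHom he (ZMod e) x)) ↔ _
  constructor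
  · intro h y
    obtain ⟨x, rfl⟩ := hs y
    have := h x
    rwa [map_sub] at this
  · intro h x
    rw [map_sub]
    exact h _

/-- fixed-point property for the reflection `y ↦ i - y` on `ZMod m`. -/
def srFix {m : ℕ} (i : ZMod m) (g : ZMod m → A) : Prop := ∀ y : ZMod m, g (i - y) = g y

noncomputable def rotReflEquiv {e : ℕ} (he : e ∣ n) [NeZero e] (j : ZMod n) :
    {g : ZMod e → A // srFix (ZMod.castHom he (ZMod e) j) g} ≃
      {f : ZMod n → A // rotFix e f ∧ reflFix j f} :=
  ((Equiv.subtypeEquiv (extendMap he A) (fun g => (extendMap_reflFix he g j).symm)).trans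
    (Equiv.subtypeSubtypeEquivSubtypeInter _ _))

lemma card_rotFix {e : ℕ} (he : e ∣ n) [NeZero e] :
    Nat.card {f : ZMod n → A // rotFix e f} = Fintype.card A ^ e := by
  rw [← Nat.card_congr (extendMap he A)]
  simp [Nat.card_eq_fintype_card]

lemma card_rotFix_reflFix {e : ℕ} (he : e ∣ n) [NeZero e] (j : ZMod n) :
    Nat.card {f : ZMod n → A // rotFix e f ∧ reflFix j f} =
      Nat.card {g : ZMod e → A // srFix (ZMod.castHom he (ZMod e) j) g} :=
  (Nat.card_congr (rotReflEquiv he j)).symm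

end FreeOrbitsAux
end B

section C
namespace FreeOrbitsAux
open Finset
variable {A : Type*} [Fintype A] {m : ℕ} [NeZero m]

/-- translation reduces `srFix (i + 2 m')` to `srFix i`. -/
def srFixTranslate (i m' : ZMod m) :
    {g : ZMod m → A // srFix (i + 2 * m') g} ≃ {g : ZMod m → A // srFix i g} where
  toFun g := ⟨fun y => g.1 (y + m'), by
    intro y
    have := g.2 (y + m')
    have harg : i + 2 * m' - (y + m') = i - y + m' := by ring
    rw [harg] at this
    exact this⟩
  invFun h := ⟨fun y => h.1 (y - m'), by
    intro y
    have := h.2 (y - m')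
    have harg : i - (y - m') = i + 2 * m' - y - m' + m' - m' := by ring
    rw [harg, add_sub_cancel_right] at this
    exact this⟩
  left_inv g := by ext y; simp
  right_inv h := by ext y; simp

lemma min_val_lt (hm : Even m) (y : ZMod m) : min y.val (-y).val < m / 2 + 1 := by
  rcases eq_or_ne y 0 with rfl | hy
  · simp
  · rw [ZMod.neg_val, if_neg hy]
    have h1 := ZMod.val_lt y
    have h2 : y.val ≠ 0 := fun h => hy ((ZMod.val_eq_zero y).1 h)
    have h3 := Nat.even_iff.1 hm
    omega

/-- colorings fixed by `y ↦ -y` correspond to functions on `{0, …, m/2}`. -/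
noncomputable def srFixZeroEquiv (hm : Even m) :
    {g : ZMod m → A // srFix (0 : ZMod m) g} ≃ (Fin (m / 2 + 1) → A) where
  toFun g v := g.1 ((v.1 : ℕ) : ZMod m)
  invFun h := ⟨fun y => h ⟨min y.val (-y).val, min_val_lt hm y⟩, by
    intro y
    rw [zero_sub]
    exact congrArg h (Fin.ext (by
      show min (-y).val (- -y).val = min y.val (-y).val
      rw [neg_neg, Nat.min_comm]))⟩
  left_inv g := by
    ext y
    show g.1 ((min y.val (-y).val : ℕ) : ZMod m) = g.1 y
    rcases le_total y.val (-y).val with h | h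
    · rw [Nat.min_eq_left h, ZMod.natCast_val, ZMod.cast_id]
    · rw [Nat.min_eq_right h, ZMod.natCast_val, ZMod.cast_id]
      have := g.2 y
      rw [zero_sub] at this
      exact this
  right_inv h := by
    funext v
    show h ⟨min ((v.1 : ℕ) : ZMod m).val (-((v.1 : ℕ) : ZMod m)).val, _⟩ = h v
    have hv2 : v.1 < m / 2 + 1 := v.2
    have hmpos : 0 < m := Nat.pos_of_ne_zero (NeZero.ne m)
    have hvm : v.1 < m := by
      have := Nat.even_iff.1 hm; omega
    have hval : ((v.1 : ℕ) : ZMod m).val = v.1 := ZMod.val_cast_of_lt hvm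
    refine congrArg h (Fin.ext ?_)
    show min ((v.1 : ℕ) : ZMod m).val (-((v.1 : ℕ) : ZMod m)).val = v.1
    rcases eq_or_ne ((v.1 : ℕ) : ZMod m) 0 with h0 | h0
    · have hv0 : v.1 = 0 := by rw [← hval, h0, ZMod.val_zero]
      rw [ZMod.neg_val, if_pos h0, hval]
      omega
    · rw [ZMod.neg_val, if_neg h0, hval]
      have := Nat.even_iff.1 hm
      omega

lemma one_sub_val (h2 : 2 ≤ m) (y : ZMod m) :
    ((1 : ZMod m) - y).val =
      if y.val = 0 then 1 else if y.val = 1 then 0 else m + 1 - y.val := by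
  have h1m : (1 : ZMod m).val = 1 := ZMod.val_one_eq_one_mod m ▸ Nat.mod_eq_of_lt h2
  rcases eq_or_ne y.val 0 with h0 | h0
  · have hy : y = 0 := (ZMod.val_eq_zero y).1 h0
    rw [if_pos h0, hy, sub_zero, h1m]
  · rcases eq_or_ne y.val 1 with h1 | h1
    · have hy : y = 1 := by
        have := ZMod.natCast_val (R := ZMod m) y
        rw [ZMod.cast_id] at this
        rw [← this, h1, Nat.cast_one]
      rw [if_neg h0, if_pos h1, hy, sub_self, ZMod.val_zero]
    · have hlt := ZMod.val_lt y
      have hy2 : 2 ≤ y.val := by omega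
      have hcast : (1 : ZMod m) - y = ((m + 1 - y.val : ℕ) : ZMod m) := by
        have hle : y.val ≤ m + 1 := by omega
        rw [Nat.cast_sub hle]
        push_cast
        rw [ZMod.natCast_self, ZMod.natCast_val, ZMod.cast_id]
        ring
      rw [hcast, ZMod.val_cast_of_lt (by omega), if_neg h0, if_neg h1]

/-- the transversal index for the reflection `y ↦ 1 - y`. -/
noncomputable def iot (y : ZMod m) : ℕ :=
  if 1 ≤ y.val ∧ y.val ≤ m / 2 then y.val - 1 else ((1 : ZMod m) - y).val - 1

lemma iot_lt (hm : Even m) (h2 : 2 ≤ m) (y : ZMod m) : iot y < m / 2 := by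
  unfold iot
  have h1 := one_sub_val h2 y
  have h3 := ZMod.val_lt y
  have h4 := Nat.even_iff.1 hm
  split_ifs with h
  · omega
  · rw [h1]; split_ifs <;> omega

lemma iot_one_sub (hm : Even m) (h2 : 2 ≤ m) (y : ZMod m) : iot (1 - y) = iot y := by
  unfold iot
  rw [sub_sub_cancel]
  have h1 := one_sub_val h2 y
  have h3 := ZMod.val_lt y
  have h4 := Nat.even_iff.1 hm
  rw [h1]
  split_ifs <;> omega

lemma iot_cast (hm : Even m) (h2 : 2 ≤ m) (g : ZMod m → A) (hg : srFix 1 g) (y : ZMod m) :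
    g ((iot y + 1 : ℕ) : ZMod m) = g y := by
  unfold iot
  have h1 := one_sub_val h2 y
  have h3 := ZMod.val_lt y
  have h4 := Nat.even_iff.1 hm
  split_ifs with h
  · have : y.val - 1 + 1 = y.val := by omega
    rw [this, ZMod.natCast_val, ZMod.cast_id]
  · have hge : 1 ≤ ((1 : ZMod m) - y).val := by rw [h1]; split_ifs <;> omega
    have : ((1 : ZMod m) - y).val - 1 + 1 = ((1 : ZMod m) - y).val := by omega
    rw [this, ZMod.natCast_val, ZMod.cast_id]
    exact hg y

/-- colorings fixed by `y ↦ 1 - y` correspond to functions on `{1, …, m/2}`. -/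
noncomputable def srFixOneEquiv (hm : Even m) (h2 : 2 ≤ m) :
    {g : ZMod m → A // srFix (1 : ZMod m) g} ≃ (Fin (m / 2) → A) where
  toFun g v := g.1 ((v.1 + 1 : ℕ) : ZMod m)
  invFun h := ⟨fun y => h ⟨iot y, iot_lt hm h2 y⟩, by
    intro y
    exact congrArg h (Fin.ext (iot_one_sub hm h2 y))⟩
  left_inv g := by
    ext y
    exact iot_cast hm h2 g.1 g.2 y
  right_inv h := by
    funext v
    refine congrArg h (Fin.ext ?_)
    show iot ((v.1 + 1 : ℕ) : ZMod m) = v.1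
    have hv2 : v.1 < m / 2 := v.2
    have h4 := Nat.even_iff.1 hm
    have hval : ((v.1 + 1 : ℕ) : ZMod m).val = v.1 + 1 := ZMod.val_cast_of_lt (by omega)
    unfold iot
    rw [hval, if_pos (by omega)]
    omega

lemma card_fun_fin (N : ℕ) : Nat.card (Fin N → A) = Fintype.card A ^ N := by
  simp [Nat.card_eq_fintype_card]

lemma card_srFix_zero (hm : Even m) :
    Nat.card {g : ZMod m → A // srFix (0 : ZMod m) g} = Fintype.card A ^ (m / 2 + 1) := by
  rw [Nat.card_congr (srFixZeroEquiv hm), card_fun_fin]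

lemma card_srFix_one (hm : Even m) (h2 : 2 ≤ m) :
    Nat.card {g : ZMod m → A // srFix (1 : ZMod m) g} = Fintype.card A ^ (m / 2) := by
  rw [Nat.card_congr (srFixOneEquiv hm h2), card_fun_fin]

lemma card_srFix (hm : Even m) (i : ZMod m) :
    Nat.card {g : ZMod m → A // srFix i g} =
      if Even i.val then Fintype.card A ^ (m / 2 + 1) else Fintype.card A ^ (m / 2) := by
  have h2 : 2 ≤ m := by
    have := Nat.pos_of_ne_zero (NeZero.ne m)
    have := Nat.even_iff.1 hm
    omega
  have hdecomp : i = ((i.val % 2 : ℕ) : ZMod m) + 2 * ((i.val / 2 : ℕ) : ZMod m) := by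
    have : i.val % 2 + 2 * (i.val / 2) = i.val := Nat.mod_add_div _ _
    calc i = ((i.val : ℕ) : ZMod m) := by rw [ZMod.natCast_val, ZMod.cast_id]
    _ = ((i.val % 2 + 2 * (i.val / 2) : ℕ) : ZMod m) := by rw [this]
    _ = _ := by push_cast; ring
  rcases Nat.even_or_odd i.val with he | ho
  · rw [if_pos he]
    have h0 : i = (0 : ZMod m) + 2 * ((i.val / 2 : ℕ) : ZMod m) := by
      conv_lhs => rw [hdecomp]
      rw [Nat.even_iff.1 he]; norm_num
    rw [h0, Nat.card_congr (srFixTranslate 0 _), card_srFix_zero hm]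
  · rw [if_neg (Nat.not_even_iff_odd.2 ho)]
    have h0 : i = (1 : ZMod m) + 2 * ((i.val / 2 : ℕ) : ZMod m) := by
      conv_lhs => rw [hdecomp]
      rw [Nat.odd_iff.1 ho]; norm_num
    rw [h0, Nat.card_congr (srFixTranslate 1 _), card_srFix_one hm h2]

lemma card_range_even (N : ℕ) :
    ((Finset.range N).filter (fun v => Even v)).card = (N + 1) / 2 := by
  induction N with
  | zero => simp
  | succ N ih =>
    rw [Finset.range_add_one, Finset.filter_insert]
    rcases Nat.even_or_odd N with he | ho
    · rw [if_pos he, Finset.card_insert_of_notMem (by simp), ih]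
      have := Nat.even_iff.1 he
      omega
    · rw [if_neg (Nat.not_even_iff_odd.2 ho), ih]
      have := Nat.odd_iff.1 ho
      omega

open scoped Classical in
lemma card_even_val (hm : Even m) :
    (univ.filter (fun i : ZMod m => Even i.val)).card = m / 2 := by
  rw [Finset.card_bij (fun i _ => i.val) ?_ ?_ ?_ (t := (Finset.range m).filter (fun v => Even v))]
  · rw [card_range_even]
    have := Nat.even_iff.1 hm
    have := Nat.pos_of_ne_zero (NeZero.ne m)
    omega
  · intro i hi
    simp only [mem_filter, mem_univ, true_and] at hi
    simp only [mem_filter, mem_range]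
    exact ⟨ZMod.val_lt i, hi⟩
  · intro a _ b _ hab
    exact ZMod.val_injective _ hab
  · intro v hv
    simp only [mem_filter, mem_range] at hv
    refine ⟨(v : ZMod m), ?_, ZMod.val_cast_of_lt hv.1⟩
    simp only [mem_filter, mem_univ, true_and, ZMod.val_cast_of_lt hv.1]
    exact hv.2

open scoped Classical in
lemma sum_card_srFix (hm : Even m) :
    ∑ i : ZMod m, Nat.card {g : ZMod m → A // srFix i g} =
      (m / 2) * (Fintype.card A ^ (m / 2 + 1) + Fintype.card A ^ (m / 2)) := by
  have : ∀ i : ZMod m, Nat.card {g : ZMod m → A // srFix i g} =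
      if Even i.val then Fintype.card A ^ (m / 2 + 1) else Fintype.card A ^ (m / 2) :=
    card_srFix hm
  rw [Finset.sum_congr rfl (fun i _ => this i), Finset.sum_ite, Finset.sum_const,
    Finset.sum_const, smul_eq_mul, smul_eq_mul, card_even_val hm]
  have hodd : (univ.filter (fun i : ZMod m => ¬ Even i.val)).card = m / 2 := by
    have h := Finset.card_filter_add_card_filter_not
      (s := (univ : Finset (ZMod m))) (p := fun i : ZMod m => Even i.val)
    rw [card_even_val hm, Finset.card_univ, ZMod.card] at h
    have := Nat.even_iff.1 hm
    omega
  rw [hodd]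
  ring
end FreeOrbitsAux
end C

section D1
namespace FreeOrbitsAux
open Finset ArithmeticFunction
open scoped ArithmeticFunction ArithmeticFunction.Moebius

lemma sum_divisors_moebius_eq (N : ℕ) :
    ∑ d ∈ N.divisors, (μ d : ℤ) = if N = 1 then 1 else 0 := by
  have h := ArithmeticFunction.coe_mul_zeta_apply (f := (μ : ArithmeticFunction ℤ)) (x := N)
  rw [ArithmeticFunction.moebius_mul_coe_zeta] at h
  rw [← h, ArithmeticFunction.one_apply]

lemma sum_moebius_div_filter {n d : ℕ} (hn : n ≠ 0) (hd : d ∣ n) :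
    ∑ e ∈ n.divisors.filter (fun e => d ∣ e), (μ (n / e) : ℤ) = if d = n then 1 else 0 := by
  have hd0 : 0 < d := Nat.pos_of_dvd_of_pos hd (Nat.pos_of_ne_zero hn)
  have key : ∑ e ∈ n.divisors.filter (fun e => d ∣ e), (μ (n / e) : ℤ)
      = ∑ m ∈ (n / d).divisors, (μ ((n / d) / m) : ℤ) := by
    refine Finset.sum_bij' (fun e _ => e / d) (fun m _ => d * m) ?_ ?_ ?_ ?_ ?_
    · intro e he
      simp only [mem_filter, Nat.mem_divisors] at he
      obtain ⟨⟨hen, _⟩, hde⟩ := he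
      obtain ⟨e', rfl⟩ := hde
      show d * e' / d ∈ (n / d).divisors
      rw [Nat.mul_div_cancel_left _ hd0]
      simp only [Nat.mem_divisors]
      constructor
      · have h1 : d * e' ∣ d * (n / d) := by rw [Nat.mul_div_cancel' hd]; exact hen
        exact (Nat.mul_dvd_mul_iff_left hd0).1 h1
      · have hpos := Nat.div_pos (Nat.le_of_dvd (Nat.pos_of_ne_zero hn) hd) hd0
        omega
    · intro m hm
      simp only [Nat.mem_divisors] at hm
      simp only [mem_filter, Nat.mem_divisors]
      exact ⟨⟨Dvd.dvd.trans (Nat.mul_dvd_mul_left d hm.1) (by rw [Nat.mul_div_cancel' hd]),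
        hn⟩, Dvd.intro _ rfl⟩
    · intro e he
      simp only [mem_filter] at he
      exact Nat.mul_div_cancel' he.2
    · intro m _
      exact Nat.mul_div_cancel_left _ hd0
    · intro e he
      simp only [mem_filter, Nat.mem_divisors] at he
      obtain ⟨⟨_, _⟩, hde⟩ := he
      obtain ⟨e', rfl⟩ := hde
      show μ (n / (d * e')) = μ (n / d / (d * e' / d))
      rw [Nat.mul_div_cancel_left _ hd0, Nat.div_div_eq_div_mul]
  rw [key, Nat.sum_div_divisors, sum_divisors_moebius_eq]
  congr 1
  rw [eq_iff_iff]
  constructor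
  · intro h1
    have h2 : d * (n / d) = n := Nat.mul_div_cancel' hd
    rw [h1, mul_one] at h2
    exact h2
  · rintro rfl
    exact Nat.div_self (Nat.pos_of_ne_zero hn)

variable {n : ℕ} [NeZero n] {A : Type*} [Fintype A]

open scoped Classical in
lemma moebius_count (p : (ZMod n → A) → Prop) :
    ∑ e ∈ n.divisors, (μ (n / e) : ℤ) *
        ((Finset.univ.filter (fun f : ZMod n → A => per f ∣ e ∧ p f)).card : ℤ)
      = ((Finset.univ.filter (fun f : ZMod n → A => per f = n ∧ p f)).card : ℤ) := by
  have hn0 : n ≠ 0 := NeZero.ne n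
  calc ∑ e ∈ n.divisors, (μ (n / e) : ℤ) *
        ((Finset.univ.filter (fun f : ZMod n → A => per f ∣ e ∧ p f)).card : ℤ)
      = ∑ e ∈ n.divisors, ∑ f : ZMod n → A,
          (if per f ∣ e ∧ p f then (μ (n / e) : ℤ) else 0) := by
        refine Finset.sum_congr rfl (fun e _ => ?_)
        rw [Finset.card_filter]
        push_cast
        rw [Finset.mul_sum]
        exact Finset.sum_congr rfl (fun f _ => by split_ifs <;> simp)
    _ = ∑ f : ZMod n → A, ∑ e ∈ n.divisors,
          (if per f ∣ e ∧ p f then (μ (n / e) : ℤ) else 0) := Finset.sum_comm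
    _ = ∑ f : ZMod n → A, (if per f = n ∧ p f then (1 : ℤ) else 0) := by
        refine Finset.sum_congr rfl (fun f _ => ?_)
        by_cases hp : p f
        · simp only [hp, and_true]
          rw [← Finset.sum_filter]
          rw [sum_moebius_div_filter hn0 (per_dvd_n f)]
        · simp [hp]
    _ = _ := by
        rw [Finset.card_filter]
        push_cast
        exact Finset.sum_congr rfl (fun f _ => by split_ifs <;> simp)

end FreeOrbitsAux
end D1

section D2
namespace FreeOrbitsAux
open Finset ArithmeticFunction
open scoped ArithmeticFunction ArithmeticFunction.Moebius

lemma nat_card_subtype {α : Type*} [Fintype α] (p : α → Prop) [DecidablePred p] :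
    Nat.card {x // p x} = (univ.filter p).card := by
  rw [Nat.card_eq_fintype_card, Fintype.card_subtype]

variable {n : ℕ} [NeZero n] {A : Type*} [Fintype A]

open scoped Classical in
lemma card_fiber {e : ℕ} (he : e ∣ n) [NeZero e] (i : ZMod e) :
    (univ.filter (fun j : ZMod n => ZMod.castHom he (ZMod e) j = i)).card = n / e := by
  have he0 : 0 < e := Nat.pos_of_ne_zero (NeZero.ne e)
  have hn0 : 0 < n := Nat.pos_of_ne_zero (NeZero.ne n)
  have hne : e * (n / e) = n := Nat.mul_div_cancel' he
  have hq : 0 < n / e := Nat.div_pos (Nat.le_of_dvd hn0 he) he0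
  obtain ⟨q, hq'⟩ : ∃ q, n / e = q + 1 := ⟨n / e - 1, by omega⟩
  have hn' : e * q + e = n := by rw [hq'] at hne; rw [← hne]; ring
  have hival := ZMod.val_lt i
  have hbound : ∀ t, t < n / e → i.val + e * t < n := by
    intro t ht
    rw [hq'] at ht
    have : e * t ≤ e * q := Nat.mul_le_mul_left e (by omega)
    omega
  have hvalc : ∀ t, t < n / e → ((i.val + e * t : ℕ) : ZMod n).val = i.val + e * t :=
    fun t ht => ZMod.val_cast_of_lt (hbound t ht)
  rw [← Finset.card_range (n / e)]
  refine (Finset.card_bij (fun t _ => ((i.val + e * t : ℕ) : ZMod n)) ?_ ?_ ?_).symm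
  · intro t ht
    simp only [mem_filter, mem_univ, true_and]
    rw [map_natCast]
    push_cast
    rw [ZMod.natCast_self, zero_mul, add_zero, ZMod.natCast_val, ZMod.cast_id]
  · intro t ht t' ht' heq
    simp only [mem_range] at ht ht'
    have heq' : ((i.val + e * t : ℕ) : ZMod n) = ((i.val + e * t' : ℕ) : ZMod n) := heq
    have h1 := hvalc t ht
    have h2 := hvalc t' ht'
    rw [heq'] at h1
    rw [h1] at h2
    exact Nat.eq_of_mul_eq_mul_left he0 (by omega)
  · intro j hj
    simp only [mem_filter, mem_univ, true_and] at hj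
    have hjc : ((j.val : ℕ) : ZMod e) = i := by
      rw [← map_natCast (ZMod.castHom he (ZMod e)) j.val, ZMod.natCast_val, ZMod.cast_id, hj]
    have hmod : j.val % e = i.val := by
      rw [← ZMod.val_natCast, hjc]
    refine ⟨j.val / e, ?_, ?_⟩
    · simp only [mem_range]
      rw [Nat.div_lt_iff_lt_mul he0]
      calc j.val < n := ZMod.val_lt j
      _ = (n / e) * e := by rw [mul_comm]; omega
    · show ((i.val + e * (j.val / e) : ℕ) : ZMod n) = j
      rw [← hmod, Nat.mod_add_div, ZMod.natCast_val, ZMod.cast_id]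

lemma moebius_odd {e : ℕ} (hn4 : 4 ∣ n) (he : e ∣ n) (ho : ¬ Even e) : μ (n / e) = 0 := by
  have he0 : 0 < e := by
    rcases Nat.eq_zero_or_pos e with rfl | h
    · exact absurd Even.zero ho
    · exact h
  have h4 : 4 ∣ n / e := by
    obtain ⟨c, hc⟩ := he
    have h2 : Nat.Coprime 2 e := Nat.coprime_two_left.mpr (Nat.not_even_iff_odd.mp ho)
    have hcop : Nat.Coprime 4 e := by
      have : (4 : ℕ) = 2 ^ 2 := by norm_num
      rw [this]
      exact Nat.Coprime.pow_left 2 h2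
    have hdc : (4 : ℕ) ∣ c * e := by
      rw [mul_comm, ← hc]; exact hn4
    have h4c : (4 : ℕ) ∣ c := (Nat.Coprime.dvd_of_dvd_mul_right hcop) hdc
    rw [hc, Nat.mul_div_cancel_left _ he0]
    exact h4c
  apply ArithmeticFunction.moebius_eq_zero_of_not_squarefree
  intro hsq
  have h2 := hsq 2 (by obtain ⟨c, hc⟩ := h4; exact ⟨c, by omega⟩)
  rw [Nat.isUnit_iff] at h2
  omega

lemma reflFix_unique (f : ZMod n → A) (hf : per f = n) {i j : ZMod n}
    (hi : reflFix i f) (hj : reflFix j f) : i = j := by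
  have hrot : ∀ x, f (x + (i - j)) = f x := by
    intro x
    have h1 : x + (i - j) = i - (j - x) := by ring
    rw [h1, hi (j - x), hj x]
  exact sub_eq_zero.1 ((per_eq_n_iff f).1 hf _ hrot)

open scoped Classical in
lemma card_aperiodic_split :
    (univ.filter (fun f : ZMod n → A => per f = n)).card
      = (univ.filter (fun f : ZMod n → A => per f = n ∧ ∀ j, ¬ reflFix j f)).card
        + ∑ j : ZMod n, (univ.filter (fun f : ZMod n → A => per f = n ∧ reflFix j f)).card := by
  have hdisj : ∀ i ∈ (univ : Finset (ZMod n)), ∀ j ∈ (univ : Finset (ZMod n)), i ≠ j →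
      Disjoint (univ.filter (fun f : ZMod n → A => per f = n ∧ reflFix i f))
        (univ.filter (fun f : ZMod n → A => per f = n ∧ reflFix j f)) := by
    intro i _ j _ hij
    rw [Finset.disjoint_left]
    intro f hfi hfj
    simp only [mem_filter, mem_univ, true_and] at hfi hfj
    exact hij (reflFix_unique f hfi.1 hfi.2 hfj.2)
  have hsplit := Finset.card_filter_add_card_filter_not
    (s := (univ : Finset (ZMod n → A)).filter (fun f => per f = n))
    (p := fun f => ∀ j : ZMod n, ¬ reflFix j f)
  rw [Finset.filter_filter, Finset.filter_filter] at hsplit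
  have hb : (univ : Finset (ZMod n → A)).filter
        (fun f => per f = n ∧ ¬ ∀ j : ZMod n, ¬ reflFix j f)
      = univ.biUnion (fun j : ZMod n =>
          univ.filter (fun f : ZMod n → A => per f = n ∧ reflFix j f)) := by
    ext f
    simp only [mem_filter, mem_univ, true_and, mem_biUnion, not_forall, not_not]
    constructor
    · rintro ⟨h1, j, h2⟩; exact ⟨j, ⟨h1, h2⟩⟩
    · rintro ⟨j, h1, h2⟩; exact ⟨h1, ⟨j, h2⟩⟩
  rw [hb, Finset.card_biUnion hdisj] at hsplit
  omega

open scoped Classical in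
lemma sum_j_card {e : ℕ} (he : e ∣ n) [NeZero e] (hev : Even e) :
    ∑ j : ZMod n, (univ.filter (fun f : ZMod n → A => per f ∣ e ∧ reflFix j f)).card
      = (n / e) * ((e / 2) * (Fintype.card A ^ (e / 2 + 1) + Fintype.card A ^ (e / 2))) := by
  have hstep : ∀ j : ZMod n,
      (univ.filter (fun f : ZMod n → A => per f ∣ e ∧ reflFix j f)).card
        = Nat.card {g : ZMod e → A // srFix (ZMod.castHom he (ZMod e) j) g} := by
    intro j
    rw [← nat_card_subtype]
    rw [Nat.card_congr (Equiv.subtypeEquivRight (q := fun f => rotFix e f ∧ reflFix j f)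
      (fun f => by rw [per_dvd_iff]))]
    exact card_rotFix_reflFix he j
  rw [Finset.sum_congr rfl (fun j _ => hstep j)]
  rw [Finset.sum_comp (fun i : ZMod e => Nat.card {g : ZMod e → A // srFix i g})
      (ZMod.castHom he (ZMod e))]
  rw [Finset.image_univ_of_surjective (castHom_surj he)]
  have hterm : ∀ i : ZMod e,
      (univ.filter (fun j : ZMod n => ZMod.castHom he (ZMod e) j = i)).card •
          Nat.card {g : ZMod e → A // srFix i g}
        = (n / e) * Nat.card {g : ZMod e → A // srFix i g} := by
    intro i
    rw [card_fiber he i, smul_eq_mul]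
  rw [Finset.sum_congr rfl (fun i _ => hterm i), ← Finset.mul_sum, sum_card_srFix hev]

open scoped Classical in
lemma card_refl_sum (hn4 : 4 ∣ n) :
    ∑ j : ZMod n, ((univ.filter (fun f : ZMod n → A => per f = n ∧ reflFix j f)).card : ℤ)
      = ∑ e ∈ n.divisors.filter (fun e => Even e), (μ (n / e) : ℤ) *
          (((n / e) * ((e / 2) * (Fintype.card A ^ (e / 2 + 1) + Fintype.card A ^ (e / 2))) : ℕ) : ℤ) := by
  have hn0 : n ≠ 0 := NeZero.ne n
  calc ∑ j : ZMod n, ((univ.filter (fun f : ZMod n → A => per f = n ∧ reflFix j f)).card : ℤ)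
      = ∑ j : ZMod n, ∑ e ∈ n.divisors, (μ (n / e) : ℤ) *
          ((univ.filter (fun f : ZMod n → A => per f ∣ e ∧ reflFix j f)).card : ℤ) :=
        Finset.sum_congr rfl (fun j _ => (moebius_count (reflFix j)).symm)
    _ = ∑ e ∈ n.divisors, (μ (n / e) : ℤ) *
          ((∑ j : ZMod n, (univ.filter (fun f : ZMod n → A => per f ∣ e ∧ reflFix j f)).card : ℕ) : ℤ) := by
        rw [Finset.sum_comm]
        refine Finset.sum_congr rfl (fun e _ => ?_)
        rw [← Finset.mul_sum]
        push_cast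
        rfl
    _ = _ := by
        rw [← Finset.sum_filter_of_ne (p := fun e => Even e)]
        · refine Finset.sum_congr rfl (fun e hee => ?_)
          simp only [mem_filter, Nat.mem_divisors] at hee
          obtain ⟨⟨hedvd, -⟩, hev⟩ := hee
          haveI : NeZero e := ⟨fun h0 => hn0 (by rw [h0] at hedvd; exact Nat.eq_zero_of_zero_dvd hedvd)⟩
          rw [sum_j_card hedvd hev]
        · intro e hee hne
          by_contra hodd
          rw [Nat.mem_divisors] at hee
          rw [moebius_odd hn4 hee.1 hodd] at hne
          simp at hne

end FreeOrbitsAux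
end D2

section E
namespace FreeOrbitsAux
open Finset MulAction ArithmeticFunction
open scoped ArithmeticFunction ArithmeticFunction.Moebius

variable {n : ℕ} [NeZero n] {A : Type*} [Fintype A]

lemma smul_r_eq_iff (j : ZMod n) (f : ZMod n → A) :
    DihedralGroup.r j • f = f ↔ ∀ x, f (x + j) = f x := by
  simp only [funext_iff, r_smul_apply]

lemma smul_sr_eq_iff (j : ZMod n) (f : ZMod n → A) :
    DihedralGroup.sr j • f = f ↔ reflFix j f := by
  simp only [funext_iff, sr_smul_apply]
  rfl

lemma stab_eq_bot_iff (f : ZMod n → A) :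
    stabilizer (DihedralGroup n) f = ⊥ ↔ (per f = n ∧ ∀ j : ZMod n, ¬ reflFix j f) := by
  rw [Subgroup.eq_bot_iff_forall]
  constructor
  · intro h
    constructor
    · rw [per_eq_n_iff]
      intro j hj
      have h1 := h (DihedralGroup.r j)
        ((mem_stabilizer_iff).2 ((smul_r_eq_iff j f).2 hj))
      rw [DihedralGroup.one_def] at h1
      exact DihedralGroup.r.injEq j 0 ▸ h1 ▸ rfl
    · intro j hj
      have h1 := h (DihedralGroup.sr j)
        ((mem_stabilizer_iff).2 ((smul_sr_eq_iff j f).2 hj))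
      rw [DihedralGroup.one_def] at h1
      cases h1
  · rintro ⟨hper, hrefl⟩ g hg
    rw [mem_stabilizer_iff] at hg
    cases g with
    | r j =>
      have h1 := (smul_r_eq_iff j f).1 hg
      have hj := (per_eq_n_iff f).1 hper j h1
      rw [DihedralGroup.one_def, hj]
    | sr j => exact absurd ((smul_sr_eq_iff j f).1 hg) (hrefl j)

lemma orbit_card_iff (f : ZMod n → A) :
    Nat.card (orbit (DihedralGroup n) f) = 2 * n ↔
      (per f = n ∧ ∀ j : ZMod n, ¬ reflFix j f) := by
  classical
  rw [← stab_eq_bot_iff]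
  have hn0 : 0 < n := Nat.pos_of_ne_zero (NeZero.ne n)
  have hos : Nat.card (orbit (DihedralGroup n) f) * Nat.card (stabilizer (DihedralGroup n) f)
      = 2 * n := by
    letI : Fintype (orbit (DihedralGroup n) f) := Fintype.ofFinite _
    rw [Nat.card_eq_fintype_card, Nat.card_eq_fintype_card,
      MulAction.card_orbit_mul_card_stabilizer_eq_card_group, ← Nat.card_eq_fintype_card,
      DihedralGroup.nat_card]
  constructor
  · intro h
    rw [h] at hos
    have hs : Nat.card (stabilizer (DihedralGroup n) f) = 1 :=
      Nat.eq_of_mul_eq_mul_left (by omega) (hos.trans (mul_one (2 * n)).symm)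
    exact (Subgroup.card_eq_one).1 hs
  · intro h
    rw [h, Subgroup.card_bot, mul_one] at hos
    exact hos

open scoped Classical in
lemma card_aperiodic :
    ((univ.filter (fun f : ZMod n → A => per f = n)).card : ℤ)
      = ∑ e ∈ n.divisors, (μ (n / e) : ℤ) * (Fintype.card A : ℤ) ^ e := by
  have h := moebius_count (n := n) (A := A) (fun _ => True)
  simp only [and_true] at h
  rw [← h]
  refine Finset.sum_congr rfl (fun e hee => ?_)
  rw [Nat.mem_divisors] at hee
  haveI : NeZero e := ⟨fun h0 => hee.2 (by rw [h0] at hee; exact Nat.eq_zero_of_zero_dvd hee.1)⟩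
  congr 1
  have h2 : (univ.filter (fun f : ZMod n → A => per f ∣ e)).card
      = Nat.card {f : ZMod n → A // rotFix e f} := by
    rw [← nat_card_subtype]
    exact Nat.card_congr (Equiv.subtypeEquivRight (fun f => (per_dvd_iff f e)))
  rw [h2, card_rotFix hee.1]
  push_cast
  ring

open scoped Classical in
lemma free_orbit_count :
    Nat.card {w : MulAction.orbitRel.Quotient (DihedralGroup n) (ZMod n → A) //
        Nat.card w.orbit = 2 * n} * (2 * n)
      = (univ.filter (fun f : ZMod n → A =>
          Nat.card (orbit (DihedralGroup n) f) = 2 * n)).card := by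
  set Om := MulAction.orbitRel.Quotient (DihedralGroup n) (ZMod n → A) with hOm
  letI : Fintype Om := Fintype.ofFinite _
  set p : Om → Prop := fun w => Nat.card w.orbit = 2 * n with hp
  set q : (ZMod n → A) → Prop := fun f => Nat.card (orbit (DihedralGroup n) f) = 2 * n with hq
  have hmaps : ∀ f ∈ univ.filter q, (Quotient.mk'' f : Om) ∈ univ.filter p := by
    intro f hf
    simp only [hq, mem_filter, mem_univ, true_and] at hf
    simp only [hp, mem_filter, mem_univ, true_and]
    rw [MulAction.orbitRel.Quotient.orbit_mk]
    exact hf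
  have hfiber : ∀ w ∈ univ.filter p,
      ((univ.filter q).filter (fun f => (Quotient.mk'' f : Om) = w)).card = 2 * n := by
    intro w hw
    simp only [hp, mem_filter, mem_univ, true_and] at hw
    have heq1 : (univ.filter q).filter (fun f => (Quotient.mk'' f : Om) = w)
        = univ.filter (fun f : ZMod n → A => (Quotient.mk'' f : Om) = w) := by
      rw [Finset.filter_filter]
      apply Finset.filter_congr
      intro f _
      constructor
      · rintro ⟨-, h⟩; exact h
      · intro h
        refine ⟨?_, h⟩
        show Nat.card (orbit (DihedralGroup n) f) = 2 * n
        have horb : MulAction.orbit (DihedralGroup n) f = w.orbit := by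
          rw [← h, MulAction.orbitRel.Quotient.orbit_mk]
        rw [horb]
        exact hw
    have heq2 : univ.filter (fun f : ZMod n → A => (Quotient.mk'' f : Om) = w)
        = w.orbit.toFinset := by
      ext f
      simp only [mem_filter, mem_univ, true_and, Set.mem_toFinset]
      exact (MulAction.orbitRel.Quotient.mem_orbit).symm
    rw [heq1, heq2, Set.toFinset_card, ← Nat.card_eq_fintype_card]
    exact hw
  calc Nat.card {w : Om // p w} * (2 * n)
      = (univ.filter p).card * (2 * n) := by rw [nat_card_subtype]
    _ = ∑ _w ∈ univ.filter p, (2 * n) := by rw [Finset.sum_const, smul_eq_mul]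
    _ = ∑ w ∈ univ.filter p,
          ((univ.filter q).filter (fun f => (Quotient.mk'' f : Om) = w)).card :=
        Finset.sum_congr rfl (fun w hw => (hfiber w hw).symm)
    _ = (univ.filter q).card := (Finset.card_eq_sum_card_fiberwise hmaps).symm

end FreeOrbitsAux
end E

section F
namespace FreeOrbitsAux

lemma div_mul_div_half {n e : ℕ} (he : e ∣ n) (h2 : 2 ∣ e) (he0 : 0 < e) :
    (n / e) * (e / 2) = n / 2 := by
  obtain ⟨a, rfl⟩ := h2
  obtain ⟨c, rfl⟩ := he
  rw [Nat.mul_div_cancel_left _ he0]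
  rw [Nat.mul_div_cancel_left a (by norm_num : (0:ℕ) < 2)]
  rw [show 2 * a * c = 2 * (a * c) by ring, Nat.mul_div_cancel_left _ (by norm_num : (0:ℕ) < 2)]
  ring

end FreeOrbitsAux
end F

end Aux

/-- For `4 ∣ n`, `n ≥ 4`, the number of free orbits (orbits of
cardinality `2n`, i.e. primitive colorings up to symmetry) of the dihedral
group `D_n` acting on colorings of the vertices of a regular `n`-gon with
`k = |A| ≥ 2` colors equals
`(1/(2n)) ∑_{d ∣ n} μ(n/d) k^d
  - (1/4) ∑_{d ∣ n, d even} μ(n/d) (k^{d/2+1} + k^{d/2})`. -/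
theorem card_free_orbits_ngon_four_dvd (n : ℕ) (hn : 4 ≤ n) (hdvd : 4 ∣ n)
    (A : Type*) [Fintype A] (hA : 2 ≤ Fintype.card A) :
    (Nat.card {ω : MulAction.orbitRel.Quotient (DihedralGroup n) (ZMod n → A) //
        Nat.card ω.orbit = 2 * n} : ℚ) =
      (1 / (2 * (n : ℚ))) * ∑ d ∈ n.divisors,
          (ArithmeticFunction.moebius (n / d) : ℚ) * (Fintype.card A : ℚ) ^ d -
        (1 / 4) * ∑ d ∈ n.divisors.filter (fun d => Even d),
          (ArithmeticFunction.moebius (n / d) : ℚ) *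
            ((Fintype.card A : ℚ) ^ (d / 2 + 1) + (Fintype.card A : ℚ) ^ (d / 2)) := by
  classical
  haveI : NeZero n := ⟨by omega⟩
  have hnQ : (n : ℚ) ≠ 0 := by
    have : (0:ℚ) < n := by exact_mod_cast (by omega : 0 < n)
    exact ne_of_gt this
  -- abbreviations
  have horb := FreeOrbitsAux.free_orbit_count (n := n) (A := A)
  have hsplit := FreeOrbitsAux.card_aperiodic_split (n := n) (A := A)
  have hrot := FreeOrbitsAux.card_aperiodic (n := n) (A := A)
  have hrefl := FreeOrbitsAux.card_refl_sum (n := n) (A := A) hdvd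
  set N2 : ℕ := n / 2 with hN2
  -- link the two filters
  have hfil : (Finset.univ.filter (fun f : ZMod n → A =>
        Nat.card (MulAction.orbit (DihedralGroup n) f) = 2 * n)).card
      = (Finset.univ.filter (fun f : ZMod n → A =>
          FreeOrbitsAux.per f = n ∧ ∀ j, ¬ FreeOrbitsAux.reflFix j f)).card := by
    refine Finset.card_bij (fun f _ => f) ?_ ?_ ?_
    · intro f hf
      simp only [Finset.mem_filter, Finset.mem_univ, true_and] at hf ⊢
      exact (FreeOrbitsAux.orbit_card_iff f).1 hf
    · intro a ha b hb h; exact h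
    · intro f hf
      simp only [Finset.mem_filter, Finset.mem_univ, true_and] at hf
      refine ⟨f, ?_, rfl⟩
      simp only [Finset.mem_filter, Finset.mem_univ, true_and]
      exact (FreeOrbitsAux.orbit_card_iff f).2 hf
  rw [hfil] at horb
  -- simplify the reflection sum
  have hrefl2 : ∑ j : ZMod n, ((Finset.univ.filter
        (fun f : ZMod n → A => FreeOrbitsAux.per f = n ∧ FreeOrbitsAux.reflFix j f)).card : ℤ)
      = (N2 : ℤ) * ∑ e ∈ n.divisors.filter (fun e => Even e),
          (ArithmeticFunction.moebius (n / e) : ℤ) *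
            ((Fintype.card A : ℤ) ^ (e / 2 + 1) + (Fintype.card A : ℤ) ^ (e / 2)) := by
    rw [hrefl, Finset.mul_sum]
    refine Finset.sum_congr rfl (fun e hee => ?_)
    simp only [Finset.mem_filter, Nat.mem_divisors] at hee
    obtain ⟨⟨hedvd, hne0⟩, hev⟩ := hee
    have he0 : 0 < e := by
      rcases Nat.eq_zero_or_pos e with rfl | h
      · exact absurd (Nat.eq_zero_of_zero_dvd hedvd) hne0
      · exact h
    have hkey : (n / e) * (e / 2) = N2 :=
      (FreeOrbitsAux.div_mul_div_half hedvd hev.two_dvd he0).trans hN2.symm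
    push_cast [← hkey]
    ring
  -- ℤ identity for the primitive count
  have hZ : ((Finset.univ.filter (fun f : ZMod n → A =>
        FreeOrbitsAux.per f = n ∧ ∀ j, ¬ FreeOrbitsAux.reflFix j f)).card : ℤ)
      = ∑ e ∈ n.divisors, (ArithmeticFunction.moebius (n / e) : ℤ) * (Fintype.card A : ℤ) ^ e
        - (N2 : ℤ) * ∑ e ∈ n.divisors.filter (fun e => Even e),
            (ArithmeticFunction.moebius (n / e) : ℤ) *
              ((Fintype.card A : ℤ) ^ (e / 2 + 1) + (Fintype.card A : ℤ) ^ (e / 2)) := by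
    rw [← hrot, ← hrefl2]
    have := hsplit
    push_cast [this]
    ring
  -- move to ℚ
  have hcast : (N2 : ℚ) = (n : ℚ) / 2 := by
    rw [Nat.cast_div (by omega : 2 ∣ n) (by norm_num)]
    norm_num
  have h2n : (2 * (n : ℚ)) ≠ 0 := mul_ne_zero two_ne_zero hnQ
  have hZQ : ((Finset.univ.filter (fun f : ZMod n → A =>
        FreeOrbitsAux.per f = n ∧ ∀ j, ¬ FreeOrbitsAux.reflFix j f)).card : ℚ)
      = (∑ d ∈ n.divisors,
          (ArithmeticFunction.moebius (n / d) : ℚ) * (Fintype.card A : ℚ) ^ d)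
        - (N2 : ℚ) * ∑ d ∈ n.divisors.filter (fun d => Even d),
            (ArithmeticFunction.moebius (n / d) : ℚ) *
              ((Fintype.card A : ℚ) ^ (d / 2 + 1) + (Fintype.card A : ℚ) ^ (d / 2)) := by
    have h2 : ((Finset.univ.filter (fun f : ZMod n → A =>
          FreeOrbitsAux.per f = n ∧ ∀ j, ¬ FreeOrbitsAux.reflFix j f)).card : ℚ)
        = ((∑ e ∈ n.divisors, (ArithmeticFunction.moebius (n / e) : ℤ) *
              (Fintype.card A : ℤ) ^ e : ℤ) : ℚ)
          - (N2 : ℚ) * ((∑ e ∈ n.divisors.filter (fun e => Even e),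
              (ArithmeticFunction.moebius (n / e) : ℤ) *
                ((Fintype.card A : ℤ) ^ (e / 2 + 1) + (Fintype.card A : ℤ) ^ (e / 2)) : ℤ) : ℚ) := by
      rw [show ((Finset.univ.filter (fun f : ZMod n → A =>
          FreeOrbitsAux.per f = n ∧ ∀ j, ¬ FreeOrbitsAux.reflFix j f)).card : ℚ)
        = (((Finset.univ.filter (fun f : ZMod n → A =>
          FreeOrbitsAux.per f = n ∧ ∀ j, ¬ FreeOrbitsAux.reflFix j f)).card : ℤ) : ℚ) by norm_cast]
      rw [hZ]
      push_cast
      ring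
    rw [h2]
    push_cast
    ring
  have hN : (Nat.card {ω : MulAction.orbitRel.Quotient (DihedralGroup n) (ZMod n → A) //
        Nat.card ω.orbit = 2 * n} : ℚ) * (2 * n)
      = ((Finset.univ.filter (fun f : ZMod n → A =>
          FreeOrbitsAux.per f = n ∧ ∀ j, ¬ FreeOrbitsAux.reflFix j f)).card : ℚ) := by
    exact_mod_cast horb
  calc (Nat.card {ω : MulAction.orbitRel.Quotient (DihedralGroup n) (ZMod n → A) //
        Nat.card ω.orbit = 2 * n} : ℚ)
      = ((Finset.univ.filter (fun f : ZMod n → A =>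
          FreeOrbitsAux.per f = n ∧ ∀ j, ¬ FreeOrbitsAux.reflFix j f)).card : ℚ) / (2 * n) := by
        rw [eq_div_iff h2n]
        exact hN
    _ = _ := by
        rw [hZQ, hcast]
        field_simp
        ring
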